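/- If there exists a (t+1)-extremal graph G containing a clique of size k, then s(t+1) ≥ s(t) + k. In particular, s(t+1) ≥ s(t) + 2 for every t ∈ ℕ. -/

import Mathlib

open SimpleGraph

/-- Independence number: maximum size of an independent (stable) set. -/
noncomputable def indepNum {V : Type*} [Fintype V] (G : SimpleGraph V) : ℕ :=
  sSup {n | ∃ s : Finset V, (s : Set V).Pairwise (fun a b => ¬ G.Adj a b) ∧ s.card = n}

/-- Clique cover number: minimum number of cliques covering all vertices. -/
noncomputable def cliqueCoverNum {V : Type*} [Fintype V] (G : SimpleGraph V) : ℕ :=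
  sInf {n | ∃ P : Finset (Finset V),
    (∀ c ∈ P, G.IsClique (c : Set V)) ∧ (∀ v : V, ∃ c ∈ P, v ∈ c) ∧ P.card = n}

/-- The (covering) gap of a graph: θ(G) - α(G). -/
noncomputable def gap {V : Type*} [Fintype V] (G : SimpleGraph V) : ℕ :=
  cliqueCoverNum G - _root_.indepNum G

/-- s(t): smallest number of vertices of a graph with gap t. -/
noncomputable def sFun (t : ℕ) : ℕ :=
  sInf {n | ∃ G : SimpleGraph (Fin n), gap G = t}

open Finset

section basics
variable {V : Type*} [Fintype V] (G : SimpleGraph V)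

lemma indep_bddAbove : BddAbove {n | ∃ s : Finset V, (s : Set V).Pairwise (fun a b => ¬ G.Adj a b) ∧ s.card = n} := by
  refine ⟨Fintype.card V, ?_⟩
  rintro n ⟨s, -, rfl⟩
  exact s.card_le_univ.trans_eq (by simp)

lemma le_indepNum {s : Finset V} (hs : (s : Set V).Pairwise fun a b => ¬ G.Adj a b) :
    s.card ≤ _root_.indepNum G := le_csSup (indep_bddAbove G) ⟨s, hs, rfl⟩

lemma indepNum_le {m : ℕ} (h : ∀ s : Finset V, (s : Set V).Pairwise (fun a b => ¬ G.Adj a b) → s.card ≤ m) :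
    _root_.indepNum G ≤ m := by
  refine csSup_le ⟨0, ∅, by simp, rfl⟩ ?_
  rintro n ⟨s, hs, rfl⟩; exact h s hs

lemma cover_nonempty [DecidableEq V] :
    {n | ∃ P : Finset (Finset V),
      (∀ c ∈ P, G.IsClique (c : Set V)) ∧ (∀ v : V, ∃ c ∈ P, v ∈ c) ∧ P.card = n}.Nonempty := by
  refine ⟨_, univ.image (fun v => ({v} : Finset V)), ?_, ?_, rfl⟩
  · rintro c hc
    simp only [Finset.mem_image] at hc
    obtain ⟨v, -, rfl⟩ := hc
    simp
  · intro v; exact ⟨{v}, mem_image_of_mem _ (mem_univ v), mem_singleton_self v⟩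

lemma cliqueCoverNum_le {P : Finset (Finset V)} (h1 : ∀ c ∈ P, G.IsClique (c : Set V))
    (h2 : ∀ v : V, ∃ c ∈ P, v ∈ c) : cliqueCoverNum G ≤ P.card := Nat.sInf_le ⟨P, h1, h2, rfl⟩

lemma cliqueCoverNum_spec [DecidableEq V] : ∃ P : Finset (Finset V),
    (∀ c ∈ P, G.IsClique (c : Set V)) ∧ (∀ v : V, ∃ c ∈ P, v ∈ c) ∧ P.card = cliqueCoverNum G :=
  Nat.sInf_mem (cover_nonempty G)

end basics

section equivinv
variable {α β : Type*} [Fintype α] [Fintype β] [DecidableEq α] [DecidableEq β]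

lemma indepNum_comap (e : α ≃ β) (G : SimpleGraph β) : _root_.indepNum (G.comap ⇑e) = _root_.indepNum G := by
  apply le_antisymm
  · apply indepNum_le
    intro s hs
    rw [← Finset.card_image_of_injective s e.injective]
    apply le_indepNum
    rintro a ha b hb hab
    simp only [Finset.coe_image, Set.mem_image, Finset.mem_coe] at ha hb
    obtain ⟨x, hx, rfl⟩ := ha; obtain ⟨y, hy, rfl⟩ := hb
    exact hs hx hy (fun h => hab (by rw [h]))
  · apply indepNum_le
    intro s hs
    rw [← Finset.card_image_of_injective s e.symm.injective]
    apply le_indepNum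
    rintro a ha b hb hab
    simp only [Finset.coe_image, Set.mem_image, Finset.mem_coe] at ha hb
    obtain ⟨x, hx, rfl⟩ := ha; obtain ⟨y, hy, rfl⟩ := hb
    have := hs hx hy (fun h => hab (by rw [h]))
    simpa using this

lemma cliqueCoverNum_comap (e : α ≃ β) (G : SimpleGraph β) :
    cliqueCoverNum (G.comap ⇑e) = cliqueCoverNum G := by
  apply le_antisymm
  · obtain ⟨P, h1, h2, h3⟩ := cliqueCoverNum_spec G
    rw [← h3]
    calc cliqueCoverNum (G.comap ⇑e) ≤ (P.image (fun c => c.image e.symm)).card := by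
          apply cliqueCoverNum_le
          · rintro c hc
            simp only [Finset.mem_image] at hc
            obtain ⟨d, hd, rfl⟩ := hc
            rintro a ha b hb hab
            simp only [Finset.coe_image, Set.mem_image, Finset.mem_coe] at ha hb
            obtain ⟨x, hx, rfl⟩ := ha; obtain ⟨y, hy, rfl⟩ := hb
            have hxy : x ≠ y := fun h => hab (by rw [h])
            have := h1 d hd hx hy hxy
            simpa using this
          · intro v
            obtain ⟨c, hc, hv⟩ := h2 (e v)
            exact ⟨c.image e.symm, mem_image_of_mem _ hc, by
              simpa using ⟨e v, hv, by simp⟩⟩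
      _ ≤ P.card := Finset.card_image_le
  · obtain ⟨P, h1, h2, h3⟩ := cliqueCoverNum_spec (G.comap ⇑e)
    rw [← h3]
    calc cliqueCoverNum G ≤ (P.image (fun c => c.image e)).card := by
          apply cliqueCoverNum_le
          · rintro c hc
            simp only [Finset.mem_image] at hc
            obtain ⟨d, hd, rfl⟩ := hc
            rintro a ha b hb hab
            simp only [Finset.coe_image, Set.mem_image, Finset.mem_coe] at ha hb
            obtain ⟨x, hx, rfl⟩ := ha; obtain ⟨y, hy, rfl⟩ := hb
            have hxy : x ≠ y := fun h => hab (by rw [h])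
            exact h1 d hd hx hy hxy
          · intro v
            obtain ⟨c, hc, hv⟩ := h2 (e.symm v)
            exact ⟨c.image e, mem_image_of_mem _ hc, by
              simpa using ⟨e.symm v, hv, by simp⟩⟩
      _ ≤ P.card := Finset.card_image_le

lemma gap_comap (e : α ≃ β) (G : SimpleGraph β) : gap (G.comap ⇑e) = gap G := by
  rw [gap, gap, indepNum_comap, cliqueCoverNum_comap]

end equivinv

section delete
variable {n : ℕ} (G : SimpleGraph (Fin n)) (Q : Finset (Fin n))

/-- graph with Q deleted -/
def del : SimpleGraph {x : Fin n // x ∈ Qᶜ} := G.comap Subtype.val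

lemma indepNum_del : _root_.indepNum (del G Q) ≤ _root_.indepNum G := by
  apply indepNum_le
  intro s hs
  rw [← Finset.card_image_of_injective s Subtype.val_injective]
  apply le_indepNum
  rintro a ha b hb hab
  simp only [Finset.coe_image, Set.mem_image, Finset.mem_coe] at ha hb
  obtain ⟨x, hx, rfl⟩ := ha; obtain ⟨y, hy, rfl⟩ := hb
  exact hs hx hy (fun h => hab (by rw [h]))

lemma cliqueCoverNum_del (hQ : G.IsClique (Q : Set (Fin n))) :
    cliqueCoverNum G ≤ cliqueCoverNum (del G Q) + 1 := by
  obtain ⟨P, h1, h2, h3⟩ := cliqueCoverNum_spec (del G Q)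
  rw [← h3]
  calc cliqueCoverNum G ≤ (insert Q (P.image (fun c => c.image Subtype.val))).card := by
        apply cliqueCoverNum_le
        · intro c hc
          rcases Finset.mem_insert.1 hc with rfl | hc
          · exact hQ
          · simp only [Finset.mem_image] at hc
            obtain ⟨d, hd, rfl⟩ := hc
            rintro a ha b hb hab
            simp only [Finset.coe_image, Set.mem_image, Finset.mem_coe] at ha hb
            obtain ⟨x, hx, rfl⟩ := ha; obtain ⟨y, hy, rfl⟩ := hb
            exact h1 d hd hx hy (fun h => hab (by rw [h]))
        · intro v
          by_cases hv : v ∈ Q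
          · exact ⟨Q, Finset.mem_insert_self _ _, hv⟩
          · obtain ⟨c, hc, hvc⟩ := h2 ⟨v, Finset.mem_compl.2 hv⟩
            refine ⟨c.image Subtype.val, Finset.mem_insert_of_mem (mem_image_of_mem _ hc), ?_⟩
            exact mem_image_of_mem _ hvc
    _ ≤ (P.image (fun c => c.image Subtype.val)).card + 1 := Finset.card_insert_le _ _
    _ ≤ P.card + 1 := by have := Finset.card_image_le (f := fun c : Finset {x : Fin n // x ∈ Qᶜ} => c.image Subtype.val) (s := P); omega

lemma exists_smaller (hQ : G.IsClique (Q : Set (Fin n))) :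
    ∃ H : SimpleGraph (Fin (n - Q.card)), gap G ≤ gap H + 1 := by
  have hcard : Fintype.card {x : Fin n // x ∈ Qᶜ} = n - Q.card := by
    simp [Finset.card_compl]
  let e : Fin (n - Q.card) ≃ {x : Fin n // x ∈ Qᶜ} := (Fintype.equivFinOfCardEq hcard).symm
  refine ⟨(del G Q).comap ⇑e, ?_⟩
  rw [gap_comap e (del G Q)]
  have h1 := indepNum_del G Q
  have h2 := cliqueCoverNum_del G Q hQ
  unfold gap
  omega

end delete

lemma sFun_le_of_ge : ∀ n t : ℕ, ∀ G : SimpleGraph (Fin n), t ≤ gap G → sFun t ≤ n := by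
  intro n
  induction n with
  | zero =>
    intro t G h
    have hz : gap G = 0 := by
      have : cliqueCoverNum G ≤ (∅ : Finset (Finset (Fin 0))).card :=
        cliqueCoverNum_le G (by simp) (fun v => absurd v.2 (by omega))
      simp at this
      unfold gap; omega
    have : t = 0 := by omega
    subst this
    exact Nat.sInf_le ⟨G, hz⟩
  | succ m ih =>
    intro t G h
    rcases eq_or_lt_of_le h with heq | hlt
    · exact Nat.sInf_le ⟨G, heq.symm⟩
    · have hQ : G.IsClique (({0} : Finset (Fin (m+1))) : Set (Fin (m+1))) := by
        simp
      obtain ⟨H, hH⟩ := exists_smaller G {0} hQ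
      have : t ≤ gap H := by omega
      exact le_trans (ih t H this) (Nat.le_succ m)

section construction

/-- `t` disjoint copies of the 5-cycle. -/
def C5t (t : ℕ) : SimpleGraph (ZMod 5 × Fin t) where
  Adj x y := x.2 = y.2 ∧ (x.1 - y.1 = 1 ∨ y.1 - x.1 = 1)
  symm := ⟨by rintro x y ⟨h1, h2⟩; exact ⟨h1.symm, h2.symm⟩⟩
  loopless := ⟨fun x h =>
    (by decide : ∀ a : ZMod 5, ¬(a - a = 1 ∨ a - a = 1)) x.1 h.2⟩

lemma c5_no_triangle : ∀ a b c : ZMod 5, (a - b = 1 ∨ b - a = 1) → (a - c = 1 ∨ c - a = 1) →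
    (b - c = 1 ∨ c - b = 1) → False := by decide

lemma c5_no_indep3 : ∀ a b c : ZMod 5, a ≠ b → a ≠ c → b ≠ c →
    ¬(a - b = 1 ∨ b - a = 1) → ¬(a - c = 1 ∨ c - a = 1) → ¬(b - c = 1 ∨ c - b = 1) → False := by
  decide

lemma c5_cases : ∀ a : ZMod 5, a = 0 ∨ a = 1 ∨ a = 2 ∨ a = 3 ∨ a = 4 := by decide

lemma c5_02 : ∀ a b : ZMod 5, (a = 0 ∨ a = 2) → (b = 0 ∨ b = 2) →
    ¬(a - b = 1 ∨ b - a = 1) := by decide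

variable (t : ℕ)

lemma adj_col {a b : ZMod 5} (j : Fin t) (h : a - b = 1 ∨ b - a = 1) :
    (C5t t).Adj (a, j) (b, j) := ⟨rfl, h⟩

lemma indepNum_C5t : _root_.indepNum (C5t t) = 2 * t := by
  apply le_antisymm
  · apply indepNum_le
    intro s hs
    rw [Finset.card_eq_sum_card_fiberwise (f := Prod.snd) (t := univ) (fun x _ => mem_univ _)]
    have hb : ∀ j : Fin t, (s.filter fun x => x.2 = j).card ≤ 2 := by
      intro j
      by_contra hgt
      push_neg at hgt
      obtain ⟨a, b, c, ha, hb, hc, hab, hac, hbc⟩ := Finset.two_lt_card_iff.1 hgt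
      simp only [Finset.mem_filter] at ha hb hc
      have h1 : ¬(C5t t).Adj a b := hs (Finset.mem_coe.2 ha.1) (Finset.mem_coe.2 hb.1) hab
      have h2 : ¬(C5t t).Adj a c := hs (Finset.mem_coe.2 ha.1) (Finset.mem_coe.2 hc.1) hac
      have h3 : ¬(C5t t).Adj b c := hs (Finset.mem_coe.2 hb.1) (Finset.mem_coe.2 hc.1) hbc
      have hj : a.2 = b.2 := by rw [ha.2, hb.2]
      have hj2 : a.2 = c.2 := by rw [ha.2, hc.2]
      have hj3 : b.2 = c.2 := by rw [hb.2, hc.2]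
      have f1 : a.1 ≠ b.1 := fun h => hab (Prod.ext h hj)
      have f2 : a.1 ≠ c.1 := fun h => hac (Prod.ext h hj2)
      have f3 : b.1 ≠ c.1 := fun h => hbc (Prod.ext h hj3)
      exact c5_no_indep3 a.1 b.1 c.1 f1 f2 f3
        (fun h => h1 ⟨hj, h⟩) (fun h => h2 ⟨hj2, h⟩) (fun h => h3 ⟨hj3, h⟩)
    calc ∑ j : Fin t, (s.filter fun x => x.2 = j).card ≤ ∑ _j : Fin t, 2 :=
          Finset.sum_le_sum (fun j _ => hb j)
      _ = 2 * t := by simp [mul_comm]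
  · have hcard : (({0, 2} : Finset (ZMod 5)) ×ˢ (univ : Finset (Fin t))).card = 2 * t := by
      have h2 : ({0, 2} : Finset (ZMod 5)).card = 2 := by decide
      rw [Finset.card_product, h2, Finset.card_univ, Fintype.card_fin]
    rw [← hcard]
    apply le_indepNum
    rintro a ha b hb hab hadj
    simp only [Finset.coe_product, Set.mem_prod, Finset.mem_coe, Finset.mem_insert,
      Finset.mem_singleton] at ha hb
    exact c5_02 a.1 b.1 ha.1 hb.1 hadj.2

def pat (p : Fin 3 × Fin t) : Finset (ZMod 5 × Fin t) :=
  if p.1 = 0 then {(0, p.2), (1, p.2)} else if p.1 = 1 then {(2, p.2), (3, p.2)} else {(4, p.2)}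

lemma cliqueCoverNum_C5t : cliqueCoverNum (C5t t) = 3 * t := by
  apply le_antisymm
  · calc cliqueCoverNum (C5t t) ≤ ((univ : Finset (Fin 3 × Fin t)).image (pat t)).card := by
          apply cliqueCoverNum_le
          · intro c hc
            simp only [Finset.mem_image] at hc
            obtain ⟨p, -, rfl⟩ := hc
            unfold pat
            split_ifs with h0 h1
            · rintro x hx y hy hxy
              simp only [Finset.coe_insert, Finset.coe_singleton, Set.mem_insert_iff,
                Set.mem_singleton_iff] at hx hy
              rcases hx with rfl | rfl <;> rcases hy with rfl | rfl <;>
                first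
                  | exact absurd rfl hxy
                  | exact adj_col t _ (by decide)
            · rintro x hx y hy hxy
              simp only [Finset.coe_insert, Finset.coe_singleton, Set.mem_insert_iff,
                Set.mem_singleton_iff] at hx hy
              rcases hx with rfl | rfl <;> rcases hy with rfl | rfl <;>
                first
                  | exact absurd rfl hxy
                  | exact adj_col t _ (by decide)
            · rintro x hx y hy hxy
              simp only [Finset.coe_singleton, Set.mem_singleton_iff] at hx hy
              subst hx; subst hy; exact absurd rfl hxy
          · rintro ⟨a, j⟩
            rcases c5_cases a with rfl | rfl | rfl | rfl | rfl
            · exact ⟨pat t (0, j), mem_image_of_mem _ (mem_univ _), by simp [pat]⟩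
            · exact ⟨pat t (0, j), mem_image_of_mem _ (mem_univ _), by simp [pat]⟩
            · exact ⟨pat t (1, j), mem_image_of_mem _ (mem_univ _), by simp [pat]⟩
            · exact ⟨pat t (1, j), mem_image_of_mem _ (mem_univ _), by simp [pat]⟩
            · exact ⟨pat t (2, j), mem_image_of_mem _ (mem_univ _), by simp [pat]⟩
      _ ≤ (univ : Finset (Fin 3 × Fin t)).card := Finset.card_image_le
      _ = 3 * t := by simp
  · obtain ⟨P, h1, h2, h3⟩ := cliqueCoverNum_spec (C5t t)
    rw [← h3]
    -- Pj : cliques meeting column j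
    set Pj : Fin t → Finset (Finset (ZMod 5 × Fin t)) :=
      fun j => P.filter (fun c => ∃ x ∈ c, x.2 = j) with hPj
    have hdisj : ∀ j ∈ (univ : Finset (Fin t)), ∀ j' ∈ univ, j ≠ j' → Disjoint (Pj j) (Pj j') := by
      intro j _ j' _ hne
      rw [Finset.disjoint_left]
      intro c hc hc'
      simp only [hPj, Finset.mem_filter] at hc hc'
      obtain ⟨hcP, x, hx, hxj⟩ := hc
      obtain ⟨-, y, hy, hyj⟩ := hc'
      have hxy : x ≠ y := fun h => hne (by rw [← hxj, h, hyj])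
      have := h1 c hcP hx hy hxy
      exact hne (by rw [← hxj, this.1, hyj])
    have hlow : ∀ j : Fin t, 3 ≤ (Pj j).card := by
      intro j
      set Qj : Finset (Finset (ZMod 5)) := (Pj j).image (fun c => c.image Prod.fst) with hQj
      have hcov : ∀ a : ZMod 5, ∃ q ∈ Qj, a ∈ q := by
        intro a
        obtain ⟨c, hc, hac⟩ := h2 (a, j)
        refine ⟨c.image Prod.fst, mem_image_of_mem _ ?_, mem_image_of_mem _ hac⟩
        exact Finset.mem_filter.2 ⟨hc, ⟨(a, j), hac, rfl⟩⟩
      have hsmall : ∀ q ∈ Qj, q.card ≤ 2 := by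
        intro q hq
        simp only [hQj, Finset.mem_image] at hq
        obtain ⟨c, hc, rfl⟩ := hq
        have hcP : c ∈ P := (Finset.mem_filter.1 hc).1
        by_contra hgt
        push_neg at hgt
        obtain ⟨a, b, d, ha, hb, hd, hab, had, hbd⟩ := Finset.two_lt_card_iff.1 hgt
        simp only [Finset.mem_image] at ha hb hd
        obtain ⟨x, hx, rfl⟩ := ha
        obtain ⟨y, hy, rfl⟩ := hb
        obtain ⟨z, hz, rfl⟩ := hd
        have e1 := h1 c hcP hx hy (fun h => hab (by rw [h]))
        have e2 := h1 c hcP hx hz (fun h => had (by rw [h]))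
        have e3 := h1 c hcP hy hz (fun h => hbd (by rw [h]))
        exact c5_no_triangle x.1 y.1 z.1 e1.2 e2.2 e3.2
      have h5 : (5 : ℕ) ≤ ∑ q ∈ Qj, q.card := by
        calc (5 : ℕ) = (univ : Finset (ZMod 5)).card := by decide
          _ ≤ (Qj.biUnion id).card := by
              apply Finset.card_le_card
              intro a _
              obtain ⟨q, hq, haq⟩ := hcov a
              exact Finset.mem_biUnion.2 ⟨q, hq, haq⟩
          _ ≤ ∑ q ∈ Qj, (id q).card := Finset.card_biUnion_le
      have : ∑ q ∈ Qj, q.card ≤ 2 * Qj.card := by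
        calc ∑ q ∈ Qj, q.card ≤ ∑ _q ∈ Qj, 2 := Finset.sum_le_sum hsmall
          _ = 2 * Qj.card := by rw [Finset.sum_const]; ring
      have hQc : Qj.card ≤ (Pj j).card := Finset.card_image_le
      omega
    calc 3 * t = ∑ _j : Fin t, 3 := by simp [mul_comm]
      _ ≤ ∑ j : Fin t, (Pj j).card := Finset.sum_le_sum (fun j _ => hlow j)
      _ = ((univ : Finset (Fin t)).biUnion Pj).card := (Finset.card_biUnion hdisj).symm
      _ ≤ P.card := Finset.card_le_card (by
          intro c hc
          obtain ⟨j, -, hcj⟩ := Finset.mem_biUnion.1 hc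
          exact (Finset.mem_filter.1 hcj).1)

lemma exists_gap (t : ℕ) : ∃ G : SimpleGraph (Fin (5 * t)), gap G = t := by
  have hcard : Fintype.card (Fin (5 * t)) = Fintype.card (ZMod 5 × Fin t) := by
    simp [ZMod.card]
  refine ⟨(C5t t).comap ⇑(Fintype.equivOfCardEq hcard), ?_⟩
  rw [gap_comap, gap, indepNum_C5t, cliqueCoverNum_C5t]
  omega

end construction


theorem sFun_jump :
    (∀ t k : ℕ,
      (∃ G : SimpleGraph (Fin (sFun (t + 1))), gap G = t + 1 ∧
        ∃ Q : Finset (Fin (sFun (t + 1))), G.IsClique (Q : Set (Fin (sFun (t + 1)))) ∧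
          Q.card = k) →
      sFun (t + 1) ≥ sFun t + k) ∧
    ∀ t : ℕ, sFun (t + 1) ≥ sFun t + 2 := by
  have part1 : ∀ t k : ℕ,
      (∃ G : SimpleGraph (Fin (sFun (t + 1))), gap G = t + 1 ∧
        ∃ Q : Finset (Fin (sFun (t + 1))), G.IsClique (Q : Set (Fin (sFun (t + 1)))) ∧
          Q.card = k) →
      sFun (t + 1) ≥ sFun t + k := by
    rintro t k ⟨G, hg, Q, hQ, rfl⟩
    obtain ⟨H, hH⟩ := exists_smaller G Q hQ
    have h1 : t ≤ gap H := by omega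
    have h2 : sFun t ≤ sFun (t + 1) - Q.card := sFun_le_of_ge _ t H h1
    have hk : Q.card ≤ sFun (t + 1) := Q.card_le_univ.trans_eq (by simp)
    omega
  refine ⟨part1, fun t => ?_⟩
  obtain ⟨G0, hG0⟩ := exists_gap (t + 1)
  have hne : {n | ∃ G : SimpleGraph (Fin n), gap G = t + 1}.Nonempty := ⟨5 * (t + 1), G0, hG0⟩
  obtain ⟨G, hG⟩ : ∃ G : SimpleGraph (Fin (sFun (t + 1))), gap G = t + 1 := Nat.sInf_mem hne
  have hedge : ∃ a b, G.Adj a b := by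
    by_contra hno
    push_neg at hno
    have ha : (univ : Finset (Fin (sFun (t + 1)))).card ≤ _root_.indepNum G :=
      le_indepNum G (fun a _ b _ _ => hno a b)
    have hcov : cliqueCoverNum G ≤ (univ : Finset (Fin (sFun (t + 1)))).card := by
      calc cliqueCoverNum G
          ≤ ((univ : Finset (Fin (sFun (t + 1)))).image fun v => ({v} : Finset _)).card := by
            apply cliqueCoverNum_le
            · rintro c hc
              simp only [Finset.mem_image] at hc
              obtain ⟨v, -, rfl⟩ := hc
              simp
            · intro v; exact ⟨{v}, mem_image_of_mem _ (mem_univ v), mem_singleton_self v⟩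
        _ ≤ (univ : Finset (Fin (sFun (t + 1)))).card := Finset.card_image_le
    have : gap G = 0 := by unfold gap; omega
    omega
  obtain ⟨a, b, hab⟩ := hedge
  have hne' : a ≠ b := G.ne_of_adj hab
  refine part1 t 2 ⟨G, hG, {a, b}, ?_, ?_⟩
  · rintro x hx y hy hxy
    simp only [Finset.coe_insert, Finset.coe_singleton, Set.mem_insert_iff,
      Set.mem_singleton_iff] at hx hy
    rcases hx with rfl | rfl <;> rcases hy with rfl | rfl
    · exact absurd rfl hxy
    · exact hab
    · exact hab.symm
    · exact absurd rfl hxy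
  · rw [Finset.card_insert_of_notMem (by simpa using hne'), Finset.card_singleton]
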